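/- Given f : ℝ → ℝ with f(r) ≠ 0 for every rational r ∈ [0,1], the function g_f is pre-continuous: for every open set G ⊆ ℝ, the preimage {x ∈ ℝ : g_f(x) ∈ G} is pre-open, i.e. it is contained in the interior of its closure. -/
import Mathlib


open Classical in
/-- The function `g_f`. -/
noncomputable def gf (f : ℝ → ℝ) (x : ℝ) : ℝ :=
  if ∃ q : ℚ, x + (q : ℝ) ∈ Set.Icc (0:ℝ) 1 ∧ f (x + (q : ℝ)) = 0 then 1 else 0

lemma gf_add_rat (f : ℝ → ℝ) (x : ℝ) (q : ℚ) : gf f (x + (q : ℝ)) = gf f x := by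
  unfold gf
  congr 1
  simp only [eq_iff_iff]
  constructor
  · rintro ⟨q', h⟩
    exact ⟨q + q', by push_cast; rw [← add_assoc]; exact h⟩
  · rintro ⟨q', h⟩
    refine ⟨q' - q, ?_⟩
    push_cast
    have e : x + ↑q + (↑q' - ↑q) = x + (q' : ℝ) := by ring
    rw [e]; exact h

theorem gf_preContinuous (f : ℝ → ℝ)
    (hf : ∀ r : ℚ, (r : ℝ) ∈ Set.Icc (0:ℝ) 1 → f r ≠ 0) :
    ∀ G : Set ℝ, IsOpen G →
      {x : ℝ | gf f x ∈ G} ⊆ interior (closure {x : ℝ | gf f x ∈ G}) := by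
  intro G _ x hx
  have hdense : Dense {y : ℝ | gf f y ∈ G} := by
    have h1 : DenseRange (fun q : ℚ => x + (q : ℝ)) := by
      have hc : DenseRange ((↑·) : ℚ → ℝ) := Rat.isDenseEmbedding_coe_real.dense
      have hs : DenseRange (fun y : ℝ => x + y) :=
        (add_left_surjective x).denseRange
      exact hs.comp hc (continuous_add_left x)
    refine h1.mono ?_
    rintro _ ⟨q, rfl⟩
    show gf f (x + (q : ℝ)) ∈ G
    rw [gf_add_rat]; exact hx
  have : closure {y : ℝ | gf f y ∈ G} = Set.univ := hdense.closure_eq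
  rw [this, interior_univ]
  trivial
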